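/- Let A = [A_{ij}] and B = [B_{ij}] be positive definite complex matrices of size nk × nk, each regarded as an n × n block matrix with k × k blocks, and let 2 ≤ μ ≤ n. Then both differences (A_μ ∘ B_μ)/(A_{μ−1} ∘ B_{μ−1}) − B_{μμ} ∘ (A_μ/A_{μ−1}) and B_{μμ} ∘ (A_μ/A_{μ−1}) − (A_μ/A_{μ−1}) ∘ (B_μ/B_{μ−1}) are positive semidefinite k × k matrices. -/

import Mathlib

open Matrix ComplexOrder

/-- The `μk × μk` leading principal block submatrix `A_μ` (for `μ ≤ n`) of an
`n × n` block matrix with `k × k` blocks. -/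
def leadBlock {n k : ℕ} (A : Matrix (Fin n × Fin k) (Fin n × Fin k) ℂ)
    (μ : ℕ) (h : μ ≤ n) : Matrix (Fin μ × Fin k) (Fin μ × Fin k) ℂ :=
  A.submatrix (fun p => (Fin.castLE h p.1, p.2)) (fun p => (Fin.castLE h p.1, p.2))

/-- The `μ`-th (1-based) diagonal `k × k` block `A_{μμ}` of an
`n × n` block matrix with `k × k` blocks. -/
def diagBlock {n k : ℕ} (A : Matrix (Fin n × Fin k) (Fin n × Fin k) ℂ)
    (μ : ℕ) (h : μ - 1 < n) : Matrix (Fin k) (Fin k) ℂ :=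
  Matrix.of fun a b => A (⟨μ - 1, h⟩, a) (⟨μ - 1, h⟩, b)

/-- The `k × k` Schur complement `A_μ / A_{μ-1}` of the leading principal block
submatrix `A_{μ-1}` in the leading principal block submatrix `A_μ`, i.e.
`A_{μμ} − M₂₁ A_{μ-1}⁻¹ M₁₂` where `M₂₁` (resp. `M₁₂`) is the `μ`-th block row
(resp. column) of `A_μ` with its last block removed. -/
noncomputable def schurLead {n k : ℕ} (A : Matrix (Fin n × Fin k) (Fin n × Fin k) ℂ)
    (μ : ℕ) (h : μ - 1 < n) : Matrix (Fin k) (Fin k) ℂ :=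
  diagBlock A μ h -
    (Matrix.of fun a (p : Fin (μ - 1) × Fin k) =>
        A (⟨μ - 1, h⟩, a) (Fin.castLE h.le p.1, p.2)) *
      (leadBlock A (μ - 1) h.le)⁻¹ *
      (Matrix.of fun (p : Fin (μ - 1) × Fin k) b =>
        A (Fin.castLE h.le p.1, p.2) (⟨μ - 1, h⟩, b))

variable {N M : Type*} [Fintype N] [Fintype M] [DecidableEq N] [DecidableEq M]

/-- Schur product theorem, semidefinite version. -/
theorem my_hadamard_posSemidef {A B : Matrix N N ℂ}
    (hA : A.PosSemidef) (hB : B.PosSemidef) : (Matrix.hadamard A B).PosSemidef := by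
  exact hA.hadamard hB

/-- Positive definite principal submatrix. -/
theorem my_posDef_submatrix {A : Matrix N N ℂ} (hA : A.PosDef)
    (e : M → N) (he : Function.Injective e) : (A.submatrix e e).PosDef := by
  exact hA.submatrix he

/-- Schur product theorem, definite version. -/
theorem my_hadamard_posDef {A B : Matrix N N ℂ}
    (hA : A.PosDef) (hB : B.PosDef) : (Matrix.hadamard A B).PosDef := by
  exact hA.hadamard hB

/-- Splitting `Fin (m+1) × Fin k` into the first `m` block rows and the last one. -/
def sumEquiv (m k : ℕ) : (Fin m × Fin k) ⊕ Fin k ≃ Fin (m + 1) × Fin k where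
  toFun := Sum.elim (fun p => (p.1.castSucc, p.2)) fun a => (Fin.last m, a)
  invFun := fun q => if h : (q.1 : ℕ) < m then .inl (⟨q.1, h⟩, q.2) else .inr q.2
  left_inv := by
    rintro (⟨i, a⟩ | a)
    · simp [Fin.castSucc, Fin.castAdd, Fin.castLE, i.isLt]
    · simp [Fin.last]
  right_inv := by
    rintro ⟨i, a⟩
    by_cases h : (i : ℕ) < m
    · simp [h, Fin.ext_iff]
    · have : (i : ℕ) = m := by omega
      simp [h, Fin.ext_iff, this, Fin.last]

variable {n k m : ℕ}

/-- The strictly-sub-diagonal column block. -/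
def colB (A : Matrix (Fin n × Fin k) (Fin n × Fin k) ℂ) (h : m < n) :
    Matrix (Fin m × Fin k) (Fin k) ℂ :=
  Matrix.of fun p b => A (Fin.castLE h.le p.1, p.2) (⟨m, h⟩, b)

/-- The strictly-sub-diagonal row block. -/
def rowB (A : Matrix (Fin n × Fin k) (Fin n × Fin k) ℂ) (h : m < n) :
    Matrix (Fin k) (Fin m × Fin k) ℂ :=
  Matrix.of fun a p => A (⟨m, h⟩, a) (Fin.castLE h.le p.1, p.2)

theorem blockEq (A : Matrix (Fin n × Fin k) (Fin n × Fin k) ℂ) (h : m < n)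
    (hn : m + 1 ≤ n) (hd : m + 1 - 1 < n) :
    (leadBlock A (m + 1) hn).submatrix (sumEquiv m k) (sumEquiv m k) =
      fromBlocks (leadBlock A m h.le) (colB A h) (rowB A h) (diagBlock A (m + 1) hd) := by
  ext p q
  cases p <;> cases q <;> rfl

theorem rowB_eq (h : m < n) {A : Matrix (Fin n × Fin k) (Fin n × Fin k) ℂ}
    (hA : A.IsHermitian) : rowB A h = (colB A h)ᴴ := by
  ext a p
  simp only [rowB, colB, conjTranspose_apply, Matrix.of_apply]
  rw [hA.apply]

theorem schurLead_eq (A : Matrix (Fin n × Fin k) (Fin n × Fin k) ℂ) (h : m < n)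
    (hd : m + 1 - 1 < n) :
    schurLead A (m + 1) hd = diagBlock A (m + 1) hd -
      rowB A h * (leadBlock A m h.le)⁻¹ * colB A h := rfl

theorem leadBlock_posDef {A : Matrix (Fin n × Fin k) (Fin n × Fin k) ℂ}
    (hA : A.PosDef) {μ : ℕ} (h : μ ≤ n) : (leadBlock A μ h).PosDef := by
  refine my_posDef_submatrix hA _ ?_
  intro p q hpq
  simp only [Prod.mk.injEq] at hpq
  exact Prod.ext (Fin.castLE_injective h hpq.1) hpq.2

theorem main_iff {A : Matrix (Fin n × Fin k) (Fin n × Fin k) ℂ} (hA : A.PosDef)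
    (h : m < n) (hn : m + 1 ≤ n) (hd : m + 1 - 1 < n) (X : Matrix (Fin k) (Fin k) ℂ) :
    (schurLead A (m + 1) hd - X).PosSemidef ↔
      (fromBlocks (leadBlock A m h.le) (colB A h) (rowB A h)
        (diagBlock A (m + 1) hd - X)).PosSemidef := by
  have h1 : (leadBlock A m h.le).PosDef := leadBlock_posDef hA h.le
  haveI := h1.isUnit.invertible
  rw [rowB_eq h hA.1, PosDef.fromBlocks₁₁ _ _ h1]
  have : schurLead A (m + 1) hd - X =
      diagBlock A (m + 1) hd - X - (colB A h)ᴴ * (leadBlock A m h.le)⁻¹ * colB A h := by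
    rw [schurLead_eq A h hd, rowB_eq h hA.1, sub_right_comm]
  rw [this]

/-- Inequality (2.8): for positive definite block matrices `A, B ∈ M_n(M_k)` and
`2 ≤ μ ≤ n`, both `(A_μ∘B_μ)/(A_{μ-1}∘B_{μ-1}) − B_{μμ}∘(A_μ/A_{μ-1})` and
`B_{μμ}∘(A_μ/A_{μ-1}) − (A_μ/A_{μ-1})∘(B_μ/B_{μ-1})` are positive semidefinite. -/
theorem schur_hadamard_chain_B {n k : ℕ}
    (A B : Matrix (Fin n × Fin k) (Fin n × Fin k) ℂ)
    (hA : A.PosDef) (hB : B.PosDef)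
    (μ : ℕ) (hμ2 : 2 ≤ μ) (hμn : μ ≤ n) :
    (schurLead (Matrix.hadamard A B) μ (by omega) -
        Matrix.hadamard (diagBlock B μ (by omega)) (schurLead A μ (by omega))).PosSemidef ∧
    (Matrix.hadamard (diagBlock B μ (by omega)) (schurLead A μ (by omega)) -
        Matrix.hadamard (schurLead A μ (by omega)) (schurLead B μ (by omega))).PosSemidef := by
  obtain ⟨m, rfl⟩ : ∃ m, μ = m + 1 := ⟨μ - 1, by omega⟩
  have h : m < n := by omega
  have hn : m + 1 ≤ n := hμn
  have hd : m + 1 - 1 < n := by omega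
  have hC : (Matrix.hadamard A B).PosDef := my_hadamard_posDef hA hB
  -- the block matrix of A with Schur complement subtracted in the corner is PSD
  have hblockA : (fromBlocks (leadBlock A m h.le) (colB A h) (rowB A h)
      (diagBlock A (m + 1) hd - schurLead A (m + 1) hd)).PosSemidef := by
    refine (main_iff hA h hn hd _).mp ?_
    rw [sub_self]
    exact PosSemidef.zero
  have hBblock : (fromBlocks (leadBlock B m h.le) (colB B h) (rowB B h)
      (diagBlock B (m + 1) hd)).PosSemidef := by
    rw [← blockEq B h hn hd]
    exact ((leadBlock_posDef hB hn).posSemidef).submatrix _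
  have hAblock : (fromBlocks (leadBlock A m h.le) (colB A h) (rowB A h)
      (diagBlock A (m + 1) hd)).PosSemidef := by
    rw [← blockEq A h hn hd]
    exact ((leadBlock_posDef hA hn).posSemidef).submatrix _
  have hSApsd : (schurLead A (m + 1) hd).PosSemidef := by
    have := (main_iff hA h hn hd 0).mpr (by rwa [sub_zero])
    rwa [sub_zero] at this
  constructor
  · refine (main_iff hC h hn hd _).mpr ?_
    have heq : fromBlocks (leadBlock (Matrix.hadamard A B) m h.le)
          (colB (Matrix.hadamard A B) h) (rowB (Matrix.hadamard A B) h)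
          (diagBlock (Matrix.hadamard A B) (m + 1) hd -
            Matrix.hadamard (diagBlock B (m + 1) hd) (schurLead A (m + 1) hd)) =
        Matrix.hadamard
          (fromBlocks (leadBlock B m h.le) (colB B h) (rowB B h) (diagBlock B (m + 1) hd))
          (fromBlocks (leadBlock A m h.le) (colB A h) (rowB A h)
            (diagBlock A (m + 1) hd - schurLead A (m + 1) hd)) := by
      ext p q
      cases p <;> cases q <;>
        simp [fromBlocks, leadBlock, colB, rowB, diagBlock, Matrix.sub_apply] <;> ring
    rw [heq]
    exact my_hadamard_posSemidef hBblock hblockA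
  · have heq2 : Matrix.hadamard (diagBlock B (m + 1) hd) (schurLead A (m + 1) hd) -
        Matrix.hadamard (schurLead A (m + 1) hd) (schurLead B (m + 1) hd) =
        Matrix.hadamard (schurLead A (m + 1) hd)
          (diagBlock B (m + 1) hd - schurLead B (m + 1) hd) := by
      ext a b
      simp [Matrix.sub_apply]
      ring
    have hdiff : diagBlock B (m + 1) hd - schurLead B (m + 1) hd =
        (colB B h)ᴴ * (leadBlock B m h.le)⁻¹ * colB B h := by
      rw [schurLead_eq B h hd, rowB_eq h hB.1, sub_sub_cancel]
    have hMB : ((colB B h)ᴴ * (leadBlock B m h.le)⁻¹ * colB B h).PosSemidef :=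
      ((leadBlock_posDef hB h.le).inv.posSemidef).conjTranspose_mul_mul_same _
    rw [heq2, hdiff]
    exact my_hadamard_posSemidef hSApsd hMB
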